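/- Let $K$ be a field, $P = K[x_1,\dots,x_n]$, $I$ a zero-dimensional ideal with $d = \dim_K(P/I)$, and $f \in P$. Let $A$ be the matrix of the multiplication-by-$\bar f$ endomorphism of $P/I$ with respect to a $K$-basis whose first element is $\bar 1$. Then the powers $A^0, A^1, \dots, A^i$ are linearly dependent over $K$ if and only if their first columns are linearly dependent over $K$. -/

import Mathlib

set_option maxHeartbeats 1000000
set_option synthInstance.maxHeartbeats 200000

theorem stmt19 {K : Type*} [Field K] {n : ℕ} (I : Ideal (MvPolynomial (Fin n) K))
    [FiniteDimensional K (MvPolynomial (Fin n) K ⧸ I)] (f : MvPolynomial (Fin n) K)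
    (d : ℕ) (hd : 0 < d) (B : Module.Basis (Fin d) K (MvPolynomial (Fin n) K ⧸ I))
    (hB : B ⟨0, hd⟩ = 1)
    (A : Matrix (Fin d) (Fin d) K)
    (hA : A = LinearMap.toMatrix B B (LinearMap.mulLeft K (Ideal.Quotient.mk I f)))
    (i : ℕ) :
    ¬ LinearIndependent K (fun j : Fin (i + 1) => A ^ (j : ℕ)) ↔
      ¬ LinearIndependent K (fun j : Fin (i + 1) => fun r : Fin d => (A ^ (j : ℕ)) r ⟨0, hd⟩) := by
  set a := Ideal.Quotient.mk I f with ha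
  have hpow : ∀ j : ℕ, A ^ j = LinearMap.toMatrix B B ((LinearMap.mulLeft K a) ^ j) := by
    intro j
    induction j with
    | zero => simp [LinearMap.toMatrix_one]
    | succ k ih => rw [pow_succ, pow_succ, ih, hA, ← LinearMap.toMatrix_mul]
  have hcol : ∀ (j : ℕ) (r : Fin d), (A ^ j) r ⟨0, hd⟩ = B.repr (a ^ j) r := by
    intro j r
    rw [hpow, LinearMap.toMatrix_apply, hB, LinearMap.pow_mulLeft,
      LinearMap.mulLeft_apply, mul_one]
  rw [Fintype.not_linearIndependent_iff, Fintype.not_linearIndependent_iff]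
  constructor
  · rintro ⟨g, hg, k, hk⟩
    refine ⟨g, ?_, k, hk⟩
    funext r
    have := congrFun (congrFun hg r) ⟨0, hd⟩
    simpa [Matrix.sum_apply, Finset.sum_apply] using this
  · rintro ⟨g, hg, k, hk⟩
    refine ⟨g, ?_, k, hk⟩
    have hs : (∑ j : Fin (i + 1), g j • a ^ (j : ℕ)) = 0 := by
      apply B.repr.injective
      ext r
      have := congrFun hg r
      simp only [Finset.sum_apply, Pi.smul_apply, Pi.zero_apply, hcol] at this
      simpa [Finsupp.finset_sum_apply] using this
    have hL : (∑ j : Fin (i + 1), g j • (LinearMap.mulLeft K a) ^ (j : ℕ)) = 0 := by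
      apply LinearMap.ext
      intro x
      simp only [LinearMap.sum_apply, LinearMap.smul_apply, LinearMap.pow_mulLeft,
        LinearMap.mulLeft_apply, LinearMap.zero_apply]
      calc ∑ j : Fin (i + 1), g j • (a ^ (j : ℕ) * x)
          = (∑ j : Fin (i + 1), g j • a ^ (j : ℕ)) * x := by
            rw [Finset.sum_mul]; simp [smul_mul_assoc]
        _ = 0 := by rw [hs, zero_mul]
    calc ∑ j : Fin (i + 1), g j • A ^ (j : ℕ)
        = LinearMap.toMatrix B B (∑ j : Fin (i + 1), g j • (LinearMap.mulLeft K a) ^ (j : ℕ)) := by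
          rw [map_sum]; simp [hpow]
      _ = 0 := by rw [hL, map_zero]
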